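/- In gl_{2n+1}(ℂ)^θ, the 2n+1 elements d_1, …, d_n, h_1, …, h_{n+1} pairwise commute, where d_i = H_i + H_{2n+2−i} and h_i are defined recursively by h_{n+1} = H_{n+1}, h_i = h_{i+1} + (1/2)X_{μ_i−μ_{2n+2−i}} with X the iterated-bracket root vectors; hence they span an abelian subalgebra strictly containing the θ-fixed Cartan subalgebra h^θ. -/

import Mathlib

open Matrix

noncomputable section

/-- `gl_{2n+1}(ℂ)` with bracket `[X,Y] = XY - YX`. -/
abbrev gl (n : ℕ) := Matrix (Fin (2*n+1)) (Fin (2*n+1)) ℂ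

/-- The matrix unit `E_{p,q}` (1-based indexing). -/
def Em (n p q : ℕ) : gl n :=
  Matrix.of fun i j => if (i : ℕ) + 1 = p ∧ (j : ℕ) + 1 = q then 1 else 0

/-- The matrix unit `E_{p,q}` in `gl_m` (1-based indexing). -/
def Eu (m p q : ℕ) : Matrix (Fin m) (Fin m) ℂ :=
  Matrix.of fun i j => if (i : ℕ) + 1 = p ∧ (j : ℕ) + 1 = q then 1 else 0

/-- `e_i = E_i + F_{2n+1-i} = E_{i,i+1} + E_{2n+2-i,2n+1-i}`. -/
def eG (n i : ℕ) : gl n := Em n i (i+1) + Em n (2*n+2-i) (2*n+1-i)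

/-- `f_i = F_i + E_{2n+1-i} = E_{i+1,i} + E_{2n+1-i,2n+2-i}`. -/
def fG (n i : ℕ) : gl n := Em n (i+1) i + Em n (2*n+1-i) (2*n+2-i)

/-- `d_a = H_a + H_{2n+2-a}`; note `d_{n+1} = 2 H_{n+1}`. -/
def dG (n a : ℕ) : gl n := Em n a a + Em n (2*n+2-a) (2*n+2-a)

/-- The involution `θ` of `gl_{2n+1}(ℂ)` with `θ(E_i) = F_{2n+1-i}`, `θ(F_i) = E_{2n+1-i}`,
`θ(H_i) = H_{2n+2-i}`. -/
def theta (n : ℕ) (X : gl n) : gl n := Matrix.of fun i j => X i.rev j.rev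

theorem theta_linear (n : ℕ) (c : ℂ) (X Y : gl n) :
    theta n (X + Y) = theta n X + theta n Y ∧ theta n (c • X) = c • theta n X := by
  constructor <;> (ext i j; simp [theta])

/-- The fixed-point subalgebra `gl_{2n+1}(ℂ)^θ`, as a subspace. -/
def Fixed (n : ℕ) : Submodule ℂ (gl n) where
  carrier := {X | theta n X = X}
  add_mem' := by
    intro a b ha hb
    simp only [Set.mem_setOf_eq] at *
    rw [(theta_linear n 0 a b).1, ha, hb]
  zero_mem' := by
    simp only [Set.mem_setOf_eq]
    ext i j; simp [theta]
  smul_mem' := by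
    intro c x hx
    simp only [Set.mem_setOf_eq] at *
    rw [(theta_linear n c x x).2, hx]

/-- The root vector attached to the simple root `μ_i - μ_{i+1}`. -/
def simpleX (n i : ℕ) : gl n := if i ≤ n then eG n i else fG n (2*n+1-i)

/-- The root vector `X_{μ_i-μ_j}`, defined by iterated brackets. -/
def Xv (n i j : ℕ) : gl n :=
  if _ : j ≤ i + 1 then simpleX n i else ⁅simpleX n i, Xv n (i+1) j⁆
termination_by j - i
decreasing_by omega

/-- The elements `h_{n+1} = H_{n+1}`, `h_i = h_{i+1} + ½ X_{μ_i-μ_{2n+2-i}}` of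
`gl_{2n+1}(ℂ)^θ`. -/
def hv (n i : ℕ) : gl n :=
  if n + 1 ≤ i then Em n (n+1) (n+1)
  else hv n (i+1) + (1/2 : ℂ) • Xv n i (2*n+2-i)
termination_by n + 1 - i
decreasing_by omega

lemma Em_mul (n p q r s : ℕ) :
    Em n p q * Em n r s =
      if q = r ∧ 1 ≤ q ∧ q ≤ 2*n+1 then Em n p s else 0 := by
  ext i j
  rw [Matrix.mul_apply]
  by_cases h : q = r ∧ 1 ≤ q ∧ q ≤ 2*n+1
  · obtain ⟨rfl, hq1, hq2⟩ := h
    rw [if_pos ⟨rfl, hq1, hq2⟩]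
    rw [Finset.sum_eq_single (⟨q-1, by omega⟩ : Fin (2*n+1))]
    · simp only [Em, Matrix.of_apply]
      have : q - 1 + 1 = q := by omega
      simp only [this]
      split_ifs <;> simp_all
    · intro k _ hk
      simp only [Em, Matrix.of_apply]
      have : (k : ℕ) + 1 ≠ q := by
        intro hc
        apply hk
        apply Fin.ext
        simp; omega
      split_ifs <;> simp_all
    · simp
  · rw [if_neg h]
    apply Finset.sum_eq_zero
    intro k _
    simp only [Em, Matrix.of_apply]
    split_ifs with h1 h2 <;> try simp
    exact absurd ⟨by omega, by omega, by omega⟩ h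

lemma Em_mul_eq (n : ℕ) {p s : ℕ} (q r : ℕ) (h1 : q = r) (h2 : 1 ≤ q) (h3 : q ≤ 2*n+1) :
    Em n p q * Em n r s = Em n p s := by
  rw [Em_mul, if_pos ⟨h1, h2, h3⟩]

lemma Em_mul_ne (n : ℕ) {p s q r : ℕ} (h : q ≠ r) :
    Em n p q * Em n r s = 0 := by
  rw [Em_mul, if_neg]; tauto

lemma simpleX_eq (n k : ℕ) (h : k ≤ 2*n+1) :
    simpleX n k = Em n k (k+1) + Em n (2*n+2-k) (2*n+1-k) := by
  unfold simpleX eG fG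
  split_ifs with hk
  · rfl
  · rw [show 2*n+1-(2*n+1-k) = k by omega, show 2*n+1-k+1 = 2*n+2-k by omega,
        show 2*n+2-(2*n+1-k) = k+1 by omega, add_comm]

lemma X_high (n i : ℕ) (hi1 : 1 ≤ i) (hi2 : i ≤ n) :
    ∀ d k, n+1 ≤ k → k ≤ 2*n+1-i → 2*n+1-i-k = d →
      Xv n k (2*n+2-i) = Em n (2*n+2-k) i + Em n k (2*n+2-i) := by
  intro d
  induction d with
  | zero =>
    intro k hk1 hk2 hd
    have hk : k = 2*n+1-i := by omega
    rw [Xv, dif_pos (by omega), simpleX_eq n k (by omega),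
        show 2*n+1-k = i by omega, show k+1 = 2*n+2-i by omega, add_comm]
  | succ d ih =>
    intro k hk1 hk2 hd
    rw [Xv, dif_neg (by omega), ih (k+1) (by omega) (by omega) (by omega),
        simpleX_eq n k (by omega), Ring.lie_def]
    have hAC : Em n k (k+1) * Em n (2*n+2-(k+1)) i = 0 := Em_mul_ne n (by omega)
    have hAD : Em n k (k+1) * Em n (k+1) (2*n+2-i) = Em n k (2*n+2-i) :=
      Em_mul_eq n _ _ rfl (by omega) (by omega)
    have hBC : Em n (2*n+2-k) (2*n+1-k) * Em n (2*n+2-(k+1)) i = Em n (2*n+2-k) i :=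
      Em_mul_eq n _ _ (by omega) (by omega) (by omega)
    have hBD : Em n (2*n+2-k) (2*n+1-k) * Em n (k+1) (2*n+2-i) = 0 := Em_mul_ne n (by omega)
    have hCA : Em n (2*n+2-(k+1)) i * Em n k (k+1) = 0 := Em_mul_ne n (by omega)
    have hCB : Em n (2*n+2-(k+1)) i * Em n (2*n+2-k) (2*n+1-k) = 0 := Em_mul_ne n (by omega)
    have hDA : Em n (k+1) (2*n+2-i) * Em n k (k+1) = 0 := Em_mul_ne n (by omega)
    have hDB : Em n (k+1) (2*n+2-i) * Em n (2*n+2-k) (2*n+1-k) = 0 := Em_mul_ne n (by omega)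
    rw [add_mul, mul_add, mul_add, add_mul, mul_add, mul_add,
        hAC, hAD, hBC, hBD, hCA, hCB, hDA, hDB]
    abel

lemma X_low (n i : ℕ) (hi1 : 1 ≤ i) (hi2 : i ≤ n) :
    ∀ d k, i < k → k ≤ n → n-k = d →
      Xv n k (2*n+2-i) = Em n k i + Em n k (2*n+2-i)
        + Em n (2*n+2-k) i + Em n (2*n+2-k) (2*n+2-i) := by
  intro d
  induction d with
  | zero =>
    intro k hk1 hk2 hd
    have hk : k = n := by omega
    rw [Xv, dif_neg (by omega), X_high n i hi1 hi2 (n-i) (k+1) (by omega) (by omega) (by omega),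
        simpleX_eq n k (by omega), Ring.lie_def]
    have hAC : Em n k (k+1) * Em n (2*n+2-(k+1)) i = Em n k i :=
      Em_mul_eq n _ _ (by omega) (by omega) (by omega)
    have hAD : Em n k (k+1) * Em n (k+1) (2*n+2-i) = Em n k (2*n+2-i) :=
      Em_mul_eq n _ _ rfl (by omega) (by omega)
    have hBC : Em n (2*n+2-k) (2*n+1-k) * Em n (2*n+2-(k+1)) i = Em n (2*n+2-k) i :=
      Em_mul_eq n _ _ (by omega) (by omega) (by omega)
    have hBD : Em n (2*n+2-k) (2*n+1-k) * Em n (k+1) (2*n+2-i) = Em n (2*n+2-k) (2*n+2-i) :=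
      Em_mul_eq n _ _ (by omega) (by omega) (by omega)
    have hCA : Em n (2*n+2-(k+1)) i * Em n k (k+1) = 0 := Em_mul_ne n (by omega)
    have hCB : Em n (2*n+2-(k+1)) i * Em n (2*n+2-k) (2*n+1-k) = 0 := Em_mul_ne n (by omega)
    have hDA : Em n (k+1) (2*n+2-i) * Em n k (k+1) = 0 := Em_mul_ne n (by omega)
    have hDB : Em n (k+1) (2*n+2-i) * Em n (2*n+2-k) (2*n+1-k) = 0 := Em_mul_ne n (by omega)
    rw [add_mul, mul_add, mul_add, add_mul, mul_add, mul_add,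
        hAC, hAD, hBC, hBD, hCA, hCB, hDA, hDB]
    abel
  | succ d ih =>
    intro k hk1 hk2 hd
    rw [Xv, dif_neg (by omega), ih (k+1) (by omega) (by omega) (by omega),
        simpleX_eq n k (by omega), Ring.lie_def]
    have h1 : Em n k (k+1) * Em n (k+1) i = Em n k i :=
      Em_mul_eq n _ _ rfl (by omega) (by omega)
    have h2 : Em n k (k+1) * Em n (k+1) (2*n+2-i) = Em n k (2*n+2-i) :=
      Em_mul_eq n _ _ rfl (by omega) (by omega)
    have h3 : Em n k (k+1) * Em n (2*n+2-(k+1)) i = 0 := Em_mul_ne n (by omega)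
    have h4 : Em n k (k+1) * Em n (2*n+2-(k+1)) (2*n+2-i) = 0 := Em_mul_ne n (by omega)
    have h5 : Em n (2*n+2-k) (2*n+1-k) * Em n (k+1) i = 0 := Em_mul_ne n (by omega)
    have h6 : Em n (2*n+2-k) (2*n+1-k) * Em n (k+1) (2*n+2-i) = 0 := Em_mul_ne n (by omega)
    have h7 : Em n (2*n+2-k) (2*n+1-k) * Em n (2*n+2-(k+1)) i = Em n (2*n+2-k) i :=
      Em_mul_eq n _ _ (by omega) (by omega) (by omega)
    have h8 : Em n (2*n+2-k) (2*n+1-k) * Em n (2*n+2-(k+1)) (2*n+2-i) = Em n (2*n+2-k) (2*n+2-i) :=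
      Em_mul_eq n _ _ (by omega) (by omega) (by omega)
    have g1 : Em n (k+1) i * Em n k (k+1) = 0 := Em_mul_ne n (by omega)
    have g2 : Em n (k+1) i * Em n (2*n+2-k) (2*n+1-k) = 0 := Em_mul_ne n (by omega)
    have g3 : Em n (k+1) (2*n+2-i) * Em n k (k+1) = 0 := Em_mul_ne n (by omega)
    have g4 : Em n (k+1) (2*n+2-i) * Em n (2*n+2-k) (2*n+1-k) = 0 := Em_mul_ne n (by omega)
    have g5 : Em n (2*n+2-(k+1)) i * Em n k (k+1) = 0 := Em_mul_ne n (by omega)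
    have g6 : Em n (2*n+2-(k+1)) i * Em n (2*n+2-k) (2*n+1-k) = 0 := Em_mul_ne n (by omega)
    have g7 : Em n (2*n+2-(k+1)) (2*n+2-i) * Em n k (k+1) = 0 := Em_mul_ne n (by omega)
    have g8 : Em n (2*n+2-(k+1)) (2*n+2-i) * Em n (2*n+2-k) (2*n+1-k) = 0 := Em_mul_ne n (by omega)
    simp only [add_mul, mul_add]
    rw [h1, h2, h3, h4, h5, h6, h7, h8, g1, g2, g3, g4, g5, g6, g7, g8]
    abel

/-- `Q_j = E_{jj} + E_{j,m-j} + E_{m-j,j} + E_{m-j,m-j}`, `m = 2n+2`. -/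
def Qm (n j : ℕ) : gl n :=
  Em n j j + Em n j (2*n+2-j) + Em n (2*n+2-j) j + Em n (2*n+2-j) (2*n+2-j)

lemma Xtop_lt (n i : ℕ) (hi1 : 1 ≤ i) (hi2 : i < n) :
    Xv n i (2*n+2-i) = Qm n i - Qm n (i+1) := by
  rw [Xv, dif_neg (by omega), X_low n i hi1 (by omega) (n-(i+1)) (i+1) (by omega) (by omega) rfl,
      simpleX_eq n i (by omega), Ring.lie_def]
  have h1 : Em n i (i+1) * Em n (i+1) i = Em n i i := Em_mul_eq n _ _ rfl (by omega) (by omega)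
  have h2 : Em n i (i+1) * Em n (i+1) (2*n+2-i) = Em n i (2*n+2-i) :=
    Em_mul_eq n _ _ rfl (by omega) (by omega)
  have h3 : Em n i (i+1) * Em n (2*n+2-(i+1)) i = 0 := Em_mul_ne n (by omega)
  have h4 : Em n i (i+1) * Em n (2*n+2-(i+1)) (2*n+2-i) = 0 := Em_mul_ne n (by omega)
  have h5 : Em n (2*n+2-i) (2*n+1-i) * Em n (i+1) i = 0 := Em_mul_ne n (by omega)
  have h6 : Em n (2*n+2-i) (2*n+1-i) * Em n (i+1) (2*n+2-i) = 0 := Em_mul_ne n (by omega)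
  have h7 : Em n (2*n+2-i) (2*n+1-i) * Em n (2*n+2-(i+1)) i = Em n (2*n+2-i) i :=
    Em_mul_eq n _ _ (by omega) (by omega) (by omega)
  have h8 : Em n (2*n+2-i) (2*n+1-i) * Em n (2*n+2-(i+1)) (2*n+2-i) = Em n (2*n+2-i) (2*n+2-i) :=
    Em_mul_eq n _ _ (by omega) (by omega) (by omega)
  have g1 : Em n (i+1) i * Em n i (i+1) = Em n (i+1) (i+1) :=
    Em_mul_eq n _ _ rfl (by omega) (by omega)
  have g2 : Em n (i+1) i * Em n (2*n+2-i) (2*n+1-i) = 0 := Em_mul_ne n (by omega)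
  have g3 : Em n (i+1) (2*n+2-i) * Em n i (i+1) = 0 := Em_mul_ne n (by omega)
  have g4 : Em n (i+1) (2*n+2-i) * Em n (2*n+2-i) (2*n+1-i) = Em n (i+1) (2*n+1-i) :=
    Em_mul_eq n _ _ rfl (by omega) (by omega)
  have g5 : Em n (2*n+2-(i+1)) i * Em n i (i+1) = Em n (2*n+2-(i+1)) (i+1) :=
    Em_mul_eq n _ _ rfl (by omega) (by omega)
  have g6 : Em n (2*n+2-(i+1)) i * Em n (2*n+2-i) (2*n+1-i) = 0 := Em_mul_ne n (by omega)
  have g7 : Em n (2*n+2-(i+1)) (2*n+2-i) * Em n i (i+1) = 0 := Em_mul_ne n (by omega)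
  have g8 : Em n (2*n+2-(i+1)) (2*n+2-i) * Em n (2*n+2-i) (2*n+1-i)
      = Em n (2*n+2-(i+1)) (2*n+1-i) := Em_mul_eq n _ _ rfl (by omega) (by omega)
  simp only [add_mul, mul_add]
  rw [h1, h2, h3, h4, h5, h6, h7, h8, g1, g2, g3, g4, g5, g6, g7, g8,
      show 2*n+1-i = 2*n+2-(i+1) by omega, Qm, Qm]
  abel

lemma Xtop_n (n : ℕ) (hn : 1 ≤ n) :
    Xv n n (2*n+2-n) = Qm n n - Em n (n+1) (n+1) - Em n (n+1) (n+1) := by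
  rw [Xv, dif_neg (by omega), X_high n n hn le_rfl 0 (n+1) (by omega) (by omega) (by omega),
      simpleX_eq n n (by omega), Ring.lie_def]
  have h1 : Em n n (n+1) * Em n (2*n+2-(n+1)) n = Em n n n :=
    Em_mul_eq n _ _ (by omega) (by omega) (by omega)
  have h2 : Em n n (n+1) * Em n (n+1) (2*n+2-n) = Em n n (2*n+2-n) :=
    Em_mul_eq n _ _ rfl (by omega) (by omega)
  have h3 : Em n (2*n+2-n) (2*n+1-n) * Em n (2*n+2-(n+1)) n = Em n (2*n+2-n) n :=
    Em_mul_eq n _ _ (by omega) (by omega) (by omega)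
  have h4 : Em n (2*n+2-n) (2*n+1-n) * Em n (n+1) (2*n+2-n) = Em n (2*n+2-n) (2*n+2-n) :=
    Em_mul_eq n _ _ (by omega) (by omega) (by omega)
  have g1 : Em n (2*n+2-(n+1)) n * Em n n (n+1) = Em n (2*n+2-(n+1)) (n+1) :=
    Em_mul_eq n _ _ rfl (by omega) (by omega)
  have g2 : Em n (2*n+2-(n+1)) n * Em n (2*n+2-n) (2*n+1-n) = 0 := Em_mul_ne n (by omega)
  have g3 : Em n (n+1) (2*n+2-n) * Em n n (n+1) = 0 := Em_mul_ne n (by omega)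
  have g4 : Em n (n+1) (2*n+2-n) * Em n (2*n+2-n) (2*n+1-n) = Em n (n+1) (2*n+1-n) :=
    Em_mul_eq n _ _ rfl (by omega) (by omega)
  simp only [add_mul, mul_add]
  rw [h1, h2, h3, h4, g1, g2, g3, g4,
      show 2*n+1-n = n+1 by omega, show 2*n+2-(n+1) = n+1 by omega, Qm]
  abel

lemma hv_top (n : ℕ) : hv n (n+1) = Em n (n+1) (n+1) := by
  rw [hv, if_pos le_rfl]

lemma hv_eq (n : ℕ) : ∀ d i, 1 ≤ i → i ≤ n → n - i = d → hv n i = (1/2 : ℂ) • Qm n i := by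
  intro d
  induction d with
  | zero =>
    intro i h1 h2 hd
    have hi : i = n := by omega
    rw [hv, if_neg (by omega), hi, hv_top, Xtop_n n (by omega)]
    module
  | succ d ih =>
    intro i h1 h2 hd
    rw [hv, if_neg (by omega), ih (i+1) (by omega) (by omega) (by omega),
        Xtop_lt n i h1 (by omega)]
    module

lemma Em_diag_comm (n p q : ℕ) : Em n p p * Em n q q = Em n q q * Em n p p := by
  rcases eq_or_ne p q with rfl | h
  · rfl
  · rw [Em_mul_ne n h, Em_mul_ne n h.symm]

lemma mul_Q_zero (n p q j : ℕ) (h1 : q ≠ j) (h2 : q ≠ 2*n+2-j) :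
    Em n p q * Qm n j = 0 := by
  simp only [Qm, mul_add, Em_mul_ne n h1, Em_mul_ne n h2, add_zero]

lemma Q_mul_zero (n j r s : ℕ) (h1 : j ≠ r) (h2 : 2*n+2-j ≠ r) :
    Qm n j * Em n r s = 0 := by
  rw [show Qm n j * Em n r s =
      Em n j j * Em n r s + Em n j (2*n+2-j) * Em n r s
        + Em n (2*n+2-j) j * Em n r s + Em n (2*n+2-j) (2*n+2-j) * Em n r s from by
    rw [Qm]; noncomm_ring]
  rw [Em_mul_ne n h1, Em_mul_ne n h2, Em_mul_ne n h1, Em_mul_ne n h2]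
  simp

lemma QQ_zero (n i j : ℕ) (hij : i ≠ j) (hi1 : 1 ≤ i) (hi2 : i ≤ n) (hj1 : 1 ≤ j) (hj2 : j ≤ n) :
    Qm n i * Qm n j = 0 := by
  rw [show Qm n i * Qm n j =
      Em n i i * Qm n j + Em n i (2*n+2-i) * Qm n j
        + Em n (2*n+2-i) i * Qm n j + Em n (2*n+2-i) (2*n+2-i) * Qm n j from by
    rw [Qm]; noncomm_ring]
  rw [mul_Q_zero n _ _ _ (by omega) (by omega), mul_Q_zero n _ _ _ (by omega) (by omega),
      mul_Q_zero n _ _ _ (by omega) (by omega), mul_Q_zero n _ _ _ (by omega) (by omega)]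
  simp

lemma QQ_comm (n i j : ℕ) (hi1 : 1 ≤ i) (hi2 : i ≤ n) (hj1 : 1 ≤ j) (hj2 : j ≤ n) :
    Qm n i * Qm n j = Qm n j * Qm n i := by
  rcases eq_or_ne i j with rfl | h
  · rfl
  · rw [QQ_zero n i j h hi1 hi2 hj1 hj2, QQ_zero n j i h.symm hj1 hj2 hi1 hi2]

lemma dQ_self (n a : ℕ) (ha1 : 1 ≤ a) (ha2 : a ≤ n) :
    dG n a * Qm n a = Qm n a ∧ Qm n a * dG n a = Qm n a := by
  have e1 : Em n a a * Qm n a = Em n a a + Em n a (2*n+2-a) := by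
    rw [show Em n a a * Qm n a =
        Em n a a * Em n a a + Em n a a * Em n a (2*n+2-a)
          + Em n a a * Em n (2*n+2-a) a + Em n a a * Em n (2*n+2-a) (2*n+2-a) from by
      rw [Qm]; noncomm_ring]
    rw [Em_mul_eq n _ _ rfl (by omega) (by omega), Em_mul_eq n _ _ rfl (by omega) (by omega),
        Em_mul_ne n (by omega), Em_mul_ne n (by omega)]
    simp
  have e2 : Em n (2*n+2-a) (2*n+2-a) * Qm n a = Em n (2*n+2-a) a + Em n (2*n+2-a) (2*n+2-a) := by
    rw [show Em n (2*n+2-a) (2*n+2-a) * Qm n a =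
        Em n (2*n+2-a) (2*n+2-a) * Em n a a + Em n (2*n+2-a) (2*n+2-a) * Em n a (2*n+2-a)
          + Em n (2*n+2-a) (2*n+2-a) * Em n (2*n+2-a) a
          + Em n (2*n+2-a) (2*n+2-a) * Em n (2*n+2-a) (2*n+2-a) from by
      rw [Qm]; noncomm_ring]
    rw [Em_mul_ne n (by omega), Em_mul_ne n (by omega),
        Em_mul_eq n _ _ rfl (by omega) (by omega), Em_mul_eq n _ _ rfl (by omega) (by omega)]
    simp
  have f1 : Qm n a * Em n a a = Em n a a + Em n (2*n+2-a) a := by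
    rw [show Qm n a * Em n a a =
        Em n a a * Em n a a + Em n a (2*n+2-a) * Em n a a
          + Em n (2*n+2-a) a * Em n a a + Em n (2*n+2-a) (2*n+2-a) * Em n a a from by
      rw [Qm]; noncomm_ring]
    rw [Em_mul_eq n _ _ rfl (by omega) (by omega), Em_mul_ne n (by omega),
        Em_mul_eq n _ _ rfl (by omega) (by omega), Em_mul_ne n (by omega)]
    simp
  have f2 : Qm n a * Em n (2*n+2-a) (2*n+2-a) = Em n a (2*n+2-a) + Em n (2*n+2-a) (2*n+2-a) := by
    rw [show Qm n a * Em n (2*n+2-a) (2*n+2-a) =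
        Em n a a * Em n (2*n+2-a) (2*n+2-a) + Em n a (2*n+2-a) * Em n (2*n+2-a) (2*n+2-a)
          + Em n (2*n+2-a) a * Em n (2*n+2-a) (2*n+2-a)
          + Em n (2*n+2-a) (2*n+2-a) * Em n (2*n+2-a) (2*n+2-a) from by
      rw [Qm]; noncomm_ring]
    rw [Em_mul_ne n (by omega), Em_mul_eq n _ _ rfl (by omega) (by omega),
        Em_mul_ne n (by omega), Em_mul_eq n _ _ rfl (by omega) (by omega)]
    simp
  constructor
  · rw [dG, add_mul, e1, e2, Qm]; abel
  · rw [dG, mul_add, f1, f2, Qm]; abel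

lemma dQ_comm (n a j : ℕ) (ha1 : 1 ≤ a) (ha2 : a ≤ n) (hj1 : 1 ≤ j) (hj2 : j ≤ n) :
    dG n a * Qm n j = Qm n j * dG n a := by
  rcases eq_or_ne a j with rfl | h
  · rw [(dQ_self n a ha1 ha2).1, (dQ_self n a ha1 ha2).2]
  · rw [dG, add_mul, mul_Q_zero n _ _ _ (by omega) (by omega),
        mul_Q_zero n _ _ _ (by omega) (by omega), mul_add,
        Q_mul_zero n _ _ _ (by omega) (by omega), Q_mul_zero n _ _ _ (by omega) (by omega)]

lemma EQ_comm (n j : ℕ) (hj1 : 1 ≤ j) (hj2 : j ≤ n) :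
    Em n (n+1) (n+1) * Qm n j = Qm n j * Em n (n+1) (n+1) := by
  rw [mul_Q_zero n _ _ _ (by omega) (by omega), Q_mul_zero n _ _ _ (by omega) (by omega)]

lemma dG_comm (n a b : ℕ) : ⁅dG n a, dG n b⁆ = 0 := by
  rw [Ring.lie_def, sub_eq_zero, dG, dG, add_mul, add_mul, mul_add, mul_add, mul_add, mul_add,
      Em_diag_comm n a b, Em_diag_comm n a (2*n+2-b), Em_diag_comm n (2*n+2-a) b,
      Em_diag_comm n (2*n+2-a) (2*n+2-b)]
  abel

lemma dG_hv_comm (n : ℕ) (hn : 1 ≤ n) (a j : ℕ) (ha1 : 1 ≤ a) (ha2 : a ≤ n)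
    (hj1 : 1 ≤ j) (hj2 : j ≤ n+1) : ⁅dG n a, hv n j⁆ = 0 := by
  rcases Nat.lt_or_ge j (n+1) with h | h
  · rw [hv_eq n (n-j) j hj1 (by omega) rfl, Ring.lie_def, mul_smul_comm, smul_mul_assoc,
        dQ_comm n a j ha1 ha2 hj1 (by omega), sub_self]
  · have hj : j = n+1 := by omega
    rw [hj, hv_top, Ring.lie_def, sub_eq_zero, dG, add_mul, mul_add,
        Em_diag_comm n a (n+1), Em_diag_comm n (2*n+2-a) (n+1)]

lemma hv_hv_comm (n : ℕ) (hn : 1 ≤ n) (i j : ℕ) (hi1 : 1 ≤ i) (hi2 : i ≤ n+1)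
    (hj1 : 1 ≤ j) (hj2 : j ≤ n+1) : ⁅hv n i, hv n j⁆ = 0 := by
  rcases Nat.lt_or_ge i (n+1) with hi | hi <;> rcases Nat.lt_or_ge j (n+1) with hj | hj
  · rw [hv_eq n (n-i) i hi1 (by omega) rfl, hv_eq n (n-j) j hj1 (by omega) rfl,
        Ring.lie_def, mul_smul_comm, smul_mul_assoc, mul_smul_comm, smul_mul_assoc,
        QQ_comm n i j hi1 (by omega) hj1 (by omega), sub_self]
  · have hj' : j = n+1 := by omega
    rw [hj', hv_top, hv_eq n (n-i) i hi1 (by omega) rfl, Ring.lie_def,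
        mul_smul_comm, smul_mul_assoc, ← EQ_comm n i hi1 (by omega), sub_self]
  · have hi' : i = n+1 := by omega
    rw [hi', hv_top, hv_eq n (n-j) j hj1 (by omega) rfl, Ring.lie_def,
        mul_smul_comm, smul_mul_assoc, EQ_comm n j hj1 (by omega), sub_self]
  · have hi' : i = n+1 := by omega
    have hj' : j = n+1 := by omega
    rw [hi', hj', Ring.lie_def, sub_self]

lemma span_part (n : ℕ) (hn : 1 ≤ n) :
    Submodule.span ℂ {y : gl n | ∃ a : ℕ, 1 ≤ a ∧ a ≤ n+1 ∧ y = dG n a} <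
      Submodule.span ℂ
        ({y : gl n | ∃ a : ℕ, 1 ≤ a ∧ a ≤ n ∧ y = dG n a} ∪
          {y : gl n | ∃ i : ℕ, 1 ≤ i ∧ i ≤ n+1 ∧ y = hv n i}) := by
  rw [SetLike.lt_iff_le_and_exists]
  constructor
  · rw [Submodule.span_le]
    rintro x ⟨a, ha1, ha2, rfl⟩
    rcases Nat.lt_or_ge a (n+1) with h | h
    · exact Submodule.subset_span (Or.inl ⟨a, ha1, by omega, rfl⟩)
    · have ha : a = n+1 := by omega
      have e : dG n a = (2:ℂ) • hv n (n+1) := by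
        rw [hv_top, dG, ha, show 2*n+2-(n+1) = n+1 by omega]
        module
      rw [e]
      exact Submodule.smul_mem _ _
        (Submodule.subset_span (Or.inr ⟨n+1, by omega, le_rfl, rfl⟩))
  · refine ⟨hv n 1, Submodule.subset_span (Or.inr ⟨1, le_rfl, by omega, rfl⟩), ?_⟩
    intro hmem
    set i0 : Fin (2*n+1) := ⟨0, by omega⟩ with hi0
    set j0 : Fin (2*n+1) := ⟨2*n, by omega⟩ with hj0
    let K : Submodule ℂ (gl n) :=
      { carrier := {X | X i0 j0 = 0}
        add_mem' := by
          intro x y hx hy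
          simp only [Set.mem_setOf_eq, Matrix.add_apply] at *
          rw [hx, hy, add_zero]
        zero_mem' := rfl
        smul_mem' := by
          intro c x hx
          simp only [Set.mem_setOf_eq, Matrix.smul_apply] at *
          rw [hx, smul_zero] }
    have hle : Submodule.span ℂ {y : gl n | ∃ a : ℕ, 1 ≤ a ∧ a ≤ n+1 ∧ y = dG n a} ≤ K := by
      rw [Submodule.span_le]
      rintro x ⟨a, ha1, ha2, rfl⟩
      show dG n a i0 j0 = 0
      simp only [dG, Matrix.add_apply, Em, Matrix.of_apply, hi0, hj0, Fin.val_mk]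
      split_ifs <;> first | omega | simp_all | rfl
    have h0 : hv n 1 i0 j0 = 0 := hle hmem
    rw [hv_eq n (n-1) 1 le_rfl hn rfl] at h0
    simp only [Qm, Matrix.smul_apply, Matrix.add_apply, Em, Matrix.of_apply, hi0, hj0, Fin.val_mk] at h0
    rw [if_neg (by simp only [true_and]; omega), if_pos (by simp only [true_and]; omega),
        if_neg (by omega), if_neg (by omega)] at h0
    norm_num at h0
/-- In `gl_{2n+1}(ℂ)^θ`, the `2n+1` elements `d_1, …, d_n, h_1, …, h_{n+1}` pairwise
commute, and they span an abelian subalgebra strictly containing the `θ`-fixed Cartan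
subalgebra `h^θ = span{d_1,…,d_n,d_{n+1}}` (where `d_{n+1} = 2H_{n+1}`). -/
theorem stmt_19 (n : ℕ) (hn : 1 ≤ n) :
    (∀ a b : ℕ, 1 ≤ a → a ≤ n → 1 ≤ b → b ≤ n → ⁅dG n a, dG n b⁆ = 0) ∧
    (∀ a j : ℕ, 1 ≤ a → a ≤ n → 1 ≤ j → j ≤ n+1 → ⁅dG n a, hv n j⁆ = 0) ∧
    (∀ i j : ℕ, 1 ≤ i → i ≤ n+1 → 1 ≤ j → j ≤ n+1 → ⁅hv n i, hv n j⁆ = 0) ∧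
    Submodule.span ℂ {y : gl n | ∃ a : ℕ, 1 ≤ a ∧ a ≤ n+1 ∧ y = dG n a} <
      Submodule.span ℂ
        ({y : gl n | ∃ a : ℕ, 1 ≤ a ∧ a ≤ n ∧ y = dG n a} ∪
          {y : gl n | ∃ i : ℕ, 1 ≤ i ∧ i ≤ n+1 ∧ y = hv n i}) := by
  
  exact ⟨fun a b _ _ _ _ => dG_comm n a b,
         fun a j ha1 ha2 hj1 hj2 => dG_hv_comm n hn a j ha1 ha2 hj1 hj2,
         fun i j hi1 hi2 hj1 hj2 => hv_hv_comm n hn i j hi1 hi2 hj1 hj2,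
         span_part n hn⟩
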